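/- (Finsler's lemma) Let M, N ∈ 𝕊^n. Then xᵀ M x > 0 for all nonzero x ∈ ℝ^n with xᵀ N x = 0, if and only if there exists α ∈ ℝ such that M - αN ≻ 0. -/

import Mathlib

open Matrix Real Filter

namespace FinslerAux


variable {n : ℕ}

lemma qf_continuous (M : Matrix (Fin n) (Fin n) ℝ) :
    Continuous fun x : Fin n → ℝ => x ⬝ᵥ (M *ᵥ x) := by
  unfold dotProduct Matrix.mulVec
  exact continuous_finset_sum _ fun i _ =>
    (continuous_apply i).mul (continuous_finset_sum _ fun j _ =>
      (continuous_const.mul (continuous_apply j)))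

lemma qf_expand (M : Matrix (Fin n) (Fin n) ℝ) (s t : ℝ) (a b : Fin n → ℝ) :
    (s•a + t•b) ⬝ᵥ (M *ᵥ (s•a + t•b)) =
      s^2 * (a ⬝ᵥ (M *ᵥ a)) + (s*t) * (a ⬝ᵥ (M *ᵥ b) + b ⬝ᵥ (M *ᵥ a)) + t^2 * (b ⬝ᵥ (M *ᵥ b)) := by
  simp [Matrix.mulVec_add, Matrix.mulVec_smul, dotProduct_add, add_dotProduct,
    smul_dotProduct, dotProduct_smul, smul_eq_mul]
  ring

lemma qf_smul (M : Matrix (Fin n) (Fin n) ℝ) (s : ℝ) (x : Fin n → ℝ) :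
    (s•x) ⬝ᵥ (M *ᵥ (s•x)) = s^2 * (x ⬝ᵥ (M *ᵥ x)) := by
  have := qf_expand M s 0 x x
  simpa using this

/-- Key pairwise lemma. -/
lemma key {M N : Matrix (Fin n) (Fin n) ℝ}
    (hP : ∀ x : Fin n → ℝ, x ≠ 0 → x ⬝ᵥ (N *ᵥ x) = 0 → 0 < x ⬝ᵥ (M *ᵥ x))
    {a b : Fin n → ℝ} (ha : 0 < a ⬝ᵥ (N *ᵥ a)) (hb : b ⬝ᵥ (N *ᵥ b) < 0) :
    (a ⬝ᵥ (M *ᵥ a)) * (b ⬝ᵥ (N *ᵥ b)) < (b ⬝ᵥ (M *ᵥ b)) * (a ⬝ᵥ (N *ᵥ a)) := by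
  by_contra hcon
  push_neg at hcon
  set fa := a ⬝ᵥ (M *ᵥ a) with hfa
  set fb := b ⬝ᵥ (M *ᵥ b) with hfb
  set ga := a ⬝ᵥ (N *ᵥ a) with hga
  set gb := b ⬝ᵥ (N *ᵥ b) with hgb
  -- choose c with fa - c*ga ≤ 0 and fb - c*gb ≤ 0
  set c : ℝ := (fa*gb + fb*ga)/(2*ga*gb) with hc
  have hga0 : ga ≠ 0 := ne_of_gt ha
  have hgb0 : gb ≠ 0 := ne_of_lt hb
  have hqa : fa - c * ga ≤ 0 := by
    have h1 : fa - c * ga = (fa*gb - fb*ga)/(2*gb) := by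
      rw [hc]; field_simp; ring
    rw [h1]
    apply div_nonpos_of_nonneg_of_nonpos
    · linarith [hcon]
    · linarith
  have hqb : fb - c * gb ≤ 0 := by
    have h1 : fb - c * gb = (fb*ga - fa*gb)/(2*ga) := by
      rw [hc]; field_simp; ring
    rw [h1]
    apply div_nonpos_of_nonpos_of_nonneg <;> linarith [hcon]
  -- the cross coefficient
  set β : ℝ := (a ⬝ᵥ (M *ᵥ b) + b ⬝ᵥ (M *ᵥ a)) - c * (a ⬝ᵥ (N *ᵥ b) + b ⬝ᵥ (N *ᵥ a)) with hβ
  -- curve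
  set X : ℝ → (Fin n → ℝ) := fun t => Real.cos t • a + Real.sin t • b with hX
  set G : ℝ → ℝ := fun t => (X t) ⬝ᵥ (N *ᵥ (X t)) with hG
  have hGc : Continuous G := by
    apply (qf_continuous N).comp
    exact (Real.continuous_cos.smul continuous_const).add
      (Real.continuous_sin.smul continuous_const)
  have hG0 : G 0 = ga := by simp [hG, hX, hga]
  have hGpi2 : G (π/2) = gb := by simp [hG, hX, hgb]
  have hGpi : G π = ga := by
    simp only [hG, hX, Real.cos_pi, Real.sin_pi, zero_smul, add_zero]
    rw [show ((-1:ℝ) • a) ⬝ᵥ (N *ᵥ ((-1:ℝ) • a)) = ((-1:ℝ))^2 * ga from qf_smul N (-1) a]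
    ring
  -- for any t with G t = 0 and sin t ≠ 0, X t ≠ 0 and hence the sign fact
  have hsign : ∀ t : ℝ, Real.sin t ≠ 0 → G t = 0 → 0 < Real.cos t * Real.sin t * β := by
    intro t hst hGt
    have hXne : X t ≠ 0 := by
      intro h0
      have hbval : b = ((Real.sin t)⁻¹ * (-Real.cos t)) • a := by
        have : Real.sin t • b = -(Real.cos t • a) := by
          rw [eq_neg_iff_add_eq_zero, add_comm]; exact h0
        calc b = (Real.sin t)⁻¹ • (Real.sin t • b) := by rw [smul_smul, inv_mul_cancel₀ hst, one_smul]
        _ = (Real.sin t)⁻¹ • (-(Real.cos t • a)) := by rw [this]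
        _ = ((Real.sin t)⁻¹ * (-Real.cos t)) • a := by rw [← smul_smul]; simp
      have : gb = ((Real.sin t)⁻¹ * (-Real.cos t))^2 * ga := by
        rw [hgb, hbval]; exact qf_smul N _ a
      nlinarith [sq_nonneg ((Real.sin t)⁻¹ * (-Real.cos t))]
    have hpos := hP (X t) hXne hGt
    have hFt : (X t) ⬝ᵥ (M *ᵥ (X t)) =
        (Real.cos t)^2 * fa + (Real.cos t * Real.sin t) * (a ⬝ᵥ (M *ᵥ b) + b ⬝ᵥ (M *ᵥ a))
          + (Real.sin t)^2 * fb := qf_expand M _ _ a b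
    have hGt' : (Real.cos t)^2 * ga + (Real.cos t * Real.sin t) * (a ⬝ᵥ (N *ᵥ b) + b ⬝ᵥ (N *ᵥ a))
          + (Real.sin t)^2 * gb = 0 := by
      rw [← qf_expand N _ _ a b]; exact hGt
    -- 0 < F t = F t - c * G t = cos² (fa - c ga) + cos sin β + sin² (fb - c gb)
    have : 0 < (Real.cos t)^2 * (fa - c*ga) + (Real.cos t * Real.sin t) * β
        + (Real.sin t)^2 * (fb - c*gb) := by
      have : (Real.cos t)^2 * (fa - c*ga) + (Real.cos t * Real.sin t) * β
          + (Real.sin t)^2 * (fb - c*gb) = (X t) ⬝ᵥ (M *ᵥ (X t)) := by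
        rw [hFt, hβ]; linear_combination (-c) * hGt'
      rw [this]; exact hpos
    nlinarith [sq_nonneg (Real.cos t), sq_nonneg (Real.sin t)]
  -- first zero in (0, π/2)
  obtain ⟨t₀, ht₀mem, ht₀⟩ : ∃ t₀ ∈ Set.Ioo (0:ℝ) (π/2), G t₀ = 0 := by
    have h := intermediate_value_Ioo' (by positivity : (0:ℝ) ≤ π/2) hGc.continuousOn
    have : (0:ℝ) ∈ Set.Ioo (G (π/2)) (G 0) := by rw [hG0, hGpi2]; exact ⟨hb, ha⟩
    obtain ⟨t₀, ht₀mem, ht₀⟩ := h this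
    exact ⟨t₀, ht₀mem, ht₀⟩
  obtain ⟨t₁, ht₁mem, ht₁⟩ : ∃ t₁ ∈ Set.Ioo (π/2) π, G t₁ = 0 := by
    have h := intermediate_value_Ioo (by linarith [Real.pi_pos] : π/2 ≤ π) hGc.continuousOn
    have : (0:ℝ) ∈ Set.Ioo (G (π/2)) (G π) := by rw [hGpi, hGpi2]; exact ⟨hb, ha⟩
    obtain ⟨t₁, ht₁mem, ht₁⟩ := h this
    exact ⟨t₁, ht₁mem, ht₁⟩
  have hs₀ : 0 < Real.sin t₀ := Real.sin_pos_of_pos_of_lt_pi ht₀mem.1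
    (by linarith [ht₀mem.2, Real.pi_pos])
  have hc₀ : 0 < Real.cos t₀ := Real.cos_pos_of_mem_Ioo
    ⟨by linarith [ht₀mem.1, Real.pi_pos], ht₀mem.2⟩
  have hs₁ : 0 < Real.sin t₁ := Real.sin_pos_of_pos_of_lt_pi
    (by linarith [ht₁mem.1, Real.pi_pos]) ht₁mem.2
  have hc₁ : Real.cos t₁ < 0 := Real.cos_neg_of_pi_div_two_lt_of_lt ht₁mem.1
    (by linarith [ht₁mem.2, Real.pi_pos])
  have h₀ := hsign t₀ (ne_of_gt hs₀) ht₀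
  have h₁ := hsign t₁ (ne_of_gt hs₁) ht₁
  have hβpos : 0 < β := by
    by_contra h
    push_neg at h
    nlinarith [mul_pos hc₀ hs₀]
  have hcs₁ : Real.cos t₁ * Real.sin t₁ < 0 := mul_neg_of_neg_of_pos hc₁ hs₁
  nlinarith


lemma one_div_nat_tendsto : Tendsto (fun k : ℕ => 1 / ((k:ℝ)+1)) atTop (nhds 0) := by
  have h2 := (tendsto_const_div_atTop_nhds_zero_nat (1:ℝ)).comp (Filter.tendsto_add_atTop_nat 1)
  convert h2 using 2 with k
  simp [Function.comp]

lemma const_div_nat_tendsto (C : ℝ) :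
    Tendsto (fun k : ℕ => C / ((k:ℝ)+1)) atTop (nhds 0) := by
  have h2 := (tendsto_const_div_atTop_nhds_zero_nat C).comp (Filter.tendsto_add_atTop_nat 1)
  convert h2 using 2 with k
  simp [Function.comp]

lemma sphere_ne_zero {x : Fin n → ℝ} (hx : x ∈ Metric.sphere (0 : Fin n → ℝ) 1) : x ≠ 0 := by
  have h : ‖x‖ = 1 := mem_sphere_zero_iff_norm.mp hx
  intro h0
  rw [h0] at h
  simp at h

section Main

variable {M N : Matrix (Fin n) (Fin n) ℝ}

lemma sphere_version
    (hP : ∀ x : Fin n → ℝ, x ≠ 0 → x ⬝ᵥ (N *ᵥ x) = 0 → 0 < x ⬝ᵥ (M *ᵥ x))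
    (key : ∀ {a b : Fin n → ℝ}, 0 < a ⬝ᵥ (N *ᵥ a) → b ⬝ᵥ (N *ᵥ b) < 0 →
      (a ⬝ᵥ (M *ᵥ a)) * (b ⬝ᵥ (N *ᵥ b)) < (b ⬝ᵥ (M *ᵥ b)) * (a ⬝ᵥ (N *ᵥ a))) :
    ∃ α : ℝ, ∀ x ∈ Metric.sphere (0 : Fin n → ℝ) 1,
      α * (x ⬝ᵥ (N *ᵥ x)) < x ⬝ᵥ (M *ᵥ x) := by
  set f : (Fin n → ℝ) → ℝ := fun x => x ⬝ᵥ (M *ᵥ x) with hf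
  set g : (Fin n → ℝ) → ℝ := fun x => x ⬝ᵥ (N *ᵥ x) with hg
  set S := Metric.sphere (0 : Fin n → ℝ) 1 with hS
  have hfc : Continuous f := qf_continuous M
  have hgc : Continuous g := qf_continuous N
  have hSc : IsCompact S := isCompact_sphere _ _
  -- ratio comparison
  have hrat : ∀ a ∈ S, 0 < g a → ∀ b ∈ S, g b < 0 → f b / g b < f a / g a := by
    intro a _ hga b _ hgb
    have hk := key hga hgb
    have h1 : f a / g a - f b / g b = (f a * g b - f b * g a)/(g a * g b) := by
      rw [div_sub_div _ _ (ne_of_gt hga) (ne_of_lt hgb)]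
      ring_nf
    have h2 : 0 < (f a * g b - f b * g a)/(g a * g b) := by
      apply div_pos_of_neg_of_neg (by linarith) (mul_neg_of_pos_of_neg hga hgb)
    linarith
  by_cases hB : ∃ x ∈ S, g x < 0
  · by_cases hA : ∃ x ∈ S, 0 < g x
    · -- main case: both signs occur
      obtain ⟨a₀, ha₀S, ha₀⟩ := hA
      obtain ⟨b₀, hb₀S, hb₀⟩ := hB
      set RA : Set ℝ := (fun x => f x / g x) '' {x | x ∈ S ∧ 0 < g x} with hRA
      set RB : Set ℝ := (fun x => f x / g x) '' {x | x ∈ S ∧ g x < 0} with hRB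
      have hRAne : RA.Nonempty := ⟨_, ⟨a₀, ⟨ha₀S, ha₀⟩, rfl⟩⟩
      have hRBne : RB.Nonempty := ⟨_, ⟨b₀, ⟨hb₀S, hb₀⟩, rfl⟩⟩
      have hRAbdd : BddBelow RA := by
        refine ⟨f b₀ / g b₀, ?_⟩
        rintro y ⟨a, ⟨haS, hga⟩, rfl⟩
        exact (hrat a haS hga b₀ hb₀S hb₀).le
      have hRBbdd : BddAbove RB := by
        refine ⟨f a₀ / g a₀, ?_⟩
        rintro y ⟨b, ⟨hbS, hgb⟩, rfl⟩
        exact (hrat a₀ ha₀S ha₀ b hbS hgb).le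
      set c1 := sInf RA with hc1
      set c2 := sSup RB with hc2
      have hc21 : c2 ≤ c1 := by
        apply csSup_le hRBne
        rintro y ⟨b, ⟨hbS, hgb⟩, rfl⟩
        apply le_csInf hRAne
        rintro z ⟨a, ⟨haS, hga⟩, rfl⟩
        exact (hrat a haS hga b hbS hgb).le
      by_cases hlt : c2 < c1
      · refine ⟨(c1+c2)/2, fun x hxS => ?_⟩
        rcases lt_trichotomy (g x) 0 with hgx|hgx|hgx
        · have hle : f x / g x ≤ c2 := le_csSup hRBbdd ⟨x, ⟨hxS, hgx⟩, rfl⟩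
          have : f x / g x < (c1+c2)/2 := by linarith
          exact (div_lt_iff_of_neg hgx).mp this
        · have := hP x (sphere_ne_zero hxS) hgx
          show (c1+c2)/2 * g x < f x
          rw [hgx, mul_zero]
          exact this
        · have hge : c1 ≤ f x / g x := csInf_le hRAbdd ⟨x, ⟨hxS, hgx⟩, rfl⟩
          have : (c1+c2)/2 < f x / g x := by linarith
          exact (lt_div_iff₀ hgx).mp this
      · have hcc : c1 = c2 := le_antisymm (not_lt.mp hlt) hc21
        refine ⟨c1, fun x hxS => ?_⟩
        rcases lt_trichotomy (g x) 0 with hgx|hgx|hgx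
        · -- x has negative g; show f x / g x < c1
          have hle : f x / g x ≤ c2 := le_csSup hRBbdd ⟨x, ⟨hxS, hgx⟩, rfl⟩
          rcases lt_or_eq_of_le hle with h|h
          · exact (div_lt_iff_of_neg hgx).mp (by rw [hcc]; exact h)
          · -- r x = c2 = c1 : contradiction via a minimizing sequence in A
            exfalso
            have hfx : f x = c1 * g x := by
              rw [hcc, ← h]
              exact (div_mul_cancel₀ (f x) (ne_of_lt hgx)).symm
            have hseq : ∀ k : ℕ, ∃ a, (a ∈ S ∧ 0 < g a) ∧ f a / g a < c1 + 1/((k:ℝ)+1) := by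
              intro k
              have hlt' : c1 < c1 + 1/((k:ℝ)+1) := by
                have : (0:ℝ) < 1/((k:ℝ)+1) := by positivity
                linarith
              obtain ⟨y, ⟨a, ha, rfl⟩, hy⟩ := exists_lt_of_csInf_lt hRAne hlt'
              exact ⟨a, ha, hy⟩
            choose v hv hrv using hseq
            obtain ⟨aS, haSS, ψ, hψ, hlima⟩ := hSc.tendsto_subseq (fun k => (hv k).1)
            have hglim : Tendsto (fun k => g (v (ψ k))) atTop (nhds (g aS)) :=
              (hgc.tendsto aS).comp hlima
            have hflim : Tendsto (fun k => f (v (ψ k))) atTop (nhds (f aS)) :=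
              (hfc.tendsto aS).comp hlima
            have hrlim : Tendsto (fun k => f (v (ψ k)) / g (v (ψ k))) atTop (nhds c1) := by
              apply tendsto_of_tendsto_of_tendsto_of_le_of_le (g := fun _ : ℕ => c1)
                (h := fun k : ℕ => c1 + 1/((k:ℝ)+1)) tendsto_const_nhds
                (by simpa using tendsto_const_nhds.add one_div_nat_tendsto)
              · intro k
                exact csInf_le hRAbdd ⟨v (ψ k), hv (ψ k), rfl⟩
              · intro k
                have h1 := (hrv (ψ k)).le
                have h2 : 1/((ψ k : ℝ)+1) ≤ 1/((k:ℝ)+1) := by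
                  gcongr
                  exact_mod_cast hψ.le_apply
                linarith
            have hfaS : f aS = c1 * g aS := by
              have hmul : Tendsto (fun k => (f (v (ψ k)) / g (v (ψ k))) * g (v (ψ k)))
                  atTop (nhds (c1 * g aS)) := hrlim.mul hglim
              have heq : (fun k => (f (v (ψ k)) / g (v (ψ k))) * g (v (ψ k)))
                  = fun k => f (v (ψ k)) := by
                funext k
                exact div_mul_cancel₀ _ (ne_of_gt (hv (ψ k)).2)
              rw [heq] at hmul
              exact tendsto_nhds_unique hflim hmul
            have hgaS : 0 ≤ g aS := ge_of_tendsto' hglim (fun k => (hv (ψ k)).2.le)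
            rcases eq_or_lt_of_le hgaS with h0|h0
            · have hpos : 0 < f aS := hP aS (sphere_ne_zero haSS) h0.symm
              rw [hfaS, ← h0, mul_zero] at hpos
              exact lt_irrefl _ hpos
            · have hk : f aS * g x < f x * g aS := key h0 hgx
              rw [hfaS, hfx] at hk
              linarith [hk]
        · have := hP x (sphere_ne_zero hxS) hgx
          show c1 * g x < f x
          rw [hgx, mul_zero]
          exact this
        · -- x has positive g; show c1 < f x / g x
          have hge : c1 ≤ f x / g x := csInf_le hRAbdd ⟨x, ⟨hxS, hgx⟩, rfl⟩
          rcases lt_or_eq_of_le hge with h|h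
          · exact (lt_div_iff₀ hgx).mp h
          · exfalso
            have hfx : f x = c1 * g x := by
              rw [h]
              exact (div_mul_cancel₀ (f x) (ne_of_gt hgx)).symm
            have hseq : ∀ k : ℕ, ∃ b, (b ∈ S ∧ g b < 0) ∧ c2 - 1/((k:ℝ)+1) < f b / g b := by
              intro k
              have hlt' : c2 - 1/((k:ℝ)+1) < c2 := by
                have : (0:ℝ) < 1/((k:ℝ)+1) := by positivity
                linarith
              obtain ⟨y, ⟨b, hb, rfl⟩, hy⟩ := exists_lt_of_lt_csSup hRBne hlt'
              exact ⟨b, hb, hy⟩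
            choose v hv hrv using hseq
            obtain ⟨bS, hbSS, ψ, hψ, hlimb⟩ := hSc.tendsto_subseq (fun k => (hv k).1)
            have hglim : Tendsto (fun k => g (v (ψ k))) atTop (nhds (g bS)) :=
              (hgc.tendsto bS).comp hlimb
            have hflim : Tendsto (fun k => f (v (ψ k))) atTop (nhds (f bS)) :=
              (hfc.tendsto bS).comp hlimb
            have hrlim : Tendsto (fun k => f (v (ψ k)) / g (v (ψ k))) atTop (nhds c2) := by
              apply tendsto_of_tendsto_of_tendsto_of_le_of_le
                (g := fun k : ℕ => c2 - 1/((k:ℝ)+1)) (h := fun _ : ℕ => c2)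
                (by simpa using tendsto_const_nhds.sub one_div_nat_tendsto) tendsto_const_nhds
              · intro k
                have h1 := (hrv (ψ k)).le
                have h2 : 1/((ψ k : ℝ)+1) ≤ 1/((k:ℝ)+1) := by
                  gcongr
                  exact_mod_cast hψ.le_apply
                linarith
              · intro k
                exact le_csSup hRBbdd ⟨v (ψ k), hv (ψ k), rfl⟩
            have hfbS : f bS = c2 * g bS := by
              have hmul : Tendsto (fun k => (f (v (ψ k)) / g (v (ψ k))) * g (v (ψ k)))
                  atTop (nhds (c2 * g bS)) := hrlim.mul hglim
              have heq : (fun k => (f (v (ψ k)) / g (v (ψ k))) * g (v (ψ k)))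
                  = fun k => f (v (ψ k)) := by
                funext k
                exact div_mul_cancel₀ _ (ne_of_lt (hv (ψ k)).2)
              rw [heq] at hmul
              exact tendsto_nhds_unique hflim hmul
            have hgbS : g bS ≤ 0 := le_of_tendsto' hglim (fun k => (hv (ψ k)).2.le)
            rcases lt_or_eq_of_le hgbS with h0|h0
            · have hk : f x * g bS < f bS * g x := key hgx h0
              rw [hfbS, hfx, hcc] at hk
              linarith [hk]
            · have hpos : 0 < f bS := hP bS (sphere_ne_zero hbSS) h0
              rw [hfbS, h0, mul_zero] at hpos
              exact lt_irrefl _ hpos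
    · -- g ≤ 0 on S
      push_neg at hA
      by_contra hcon
      push_neg at hcon
      choose u hu hfu using fun k : ℕ => hcon ((k:ℝ)+1)
      obtain ⟨x₀, hx₀S, φ, hφ, hlim⟩ := hSc.tendsto_subseq hu
      obtain ⟨C, hC⟩ := hSc.exists_bound_of_continuousOn hfc.continuousOn
      have hC0 : 0 ≤ C := le_trans (norm_nonneg _) (hC (u 0) (hu 0))
      have hglim : Tendsto (fun k => g (u (φ k))) atTop (nhds (g x₀)) :=
        (hgc.tendsto x₀).comp hlim
      have hflim : Tendsto (fun k => f (u (φ k))) atTop (nhds (f x₀)) :=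
        (hfc.tendsto x₀).comp hlim
      have hgu : ∀ k : ℕ, -(C / ((k:ℝ)+1)) ≤ g (u k) := by
        intro k
        have h1 : f (u k) ≤ ((k:ℝ)+1) * g (u k) := hfu k
        have h2 : -C ≤ f (u k) := by
          have := hC (u k) (hu k)
          rw [Real.norm_eq_abs] at this
          linarith [abs_le.mp this]
        have h3 : -C ≤ ((k:ℝ)+1) * g (u k) := le_trans h2 h1
        rw [← neg_div, div_le_iff₀ (by positivity : (0:ℝ) < (k:ℝ)+1)]
        linarith
      have hgx₀ : g x₀ = 0 := by
        have hge : 0 ≤ g x₀ := by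
          apply le_of_tendsto_of_tendsto' (f := fun k : ℕ => -(C/((k:ℝ)+1)))
            (by simpa using (const_div_nat_tendsto C).neg) hglim
          intro k
          calc -(C/((k:ℝ)+1)) ≤ -(C/((φ k : ℝ)+1)) := by
                rw [neg_le_neg_iff]
                gcongr
                exact_mod_cast hφ.le_apply
            _ ≤ g (u (φ k)) := hgu (φ k)
        exact le_antisymm (hA x₀ hx₀S) hge
      have hfx₀ : f x₀ ≤ 0 := by
        apply le_of_tendsto hflim
        apply Filter.Eventually.of_forall
        intro k
        have h1 : f (u (φ k)) ≤ ((φ k : ℝ)+1) * g (u (φ k)) := hfu (φ k)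
        have h2 : g (u (φ k)) ≤ 0 := hA _ (hu (φ k))
        nlinarith [h1, h2]
      exact absurd (hP x₀ (sphere_ne_zero hx₀S) hgx₀) (not_lt.mpr hfx₀)
  · -- g ≥ 0 on S
    push_neg at hB
    by_contra hcon
    push_neg at hcon
    choose u hu hfu using fun k : ℕ => hcon (-((k:ℝ)+1))
    obtain ⟨x₀, hx₀S, φ, hφ, hlim⟩ := hSc.tendsto_subseq hu
    obtain ⟨C, hC⟩ := hSc.exists_bound_of_continuousOn hfc.continuousOn
    have hC0 : 0 ≤ C := le_trans (norm_nonneg _) (hC (u 0) (hu 0))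
    have hglim : Tendsto (fun k => g (u (φ k))) atTop (nhds (g x₀)) :=
      (hgc.tendsto x₀).comp hlim
    have hflim : Tendsto (fun k => f (u (φ k))) atTop (nhds (f x₀)) :=
      (hfc.tendsto x₀).comp hlim
    have hgu : ∀ k : ℕ, g (u k) ≤ C / ((k:ℝ)+1) := by
      intro k
      have h1 : f (u k) ≤ -((k:ℝ)+1) * g (u k) := hfu k
      have h2 : -C ≤ f (u k) := by
        have := hC (u k) (hu k)
        rw [Real.norm_eq_abs] at this
        linarith [abs_le.mp this]
      rw [le_div_iff₀ (by positivity : (0:ℝ) < (k:ℝ)+1)]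
      nlinarith
    have hgx₀ : g x₀ = 0 := by
      have hle : g x₀ ≤ 0 := by
        apply le_of_tendsto_of_tendsto' (g := fun k : ℕ => C/((k:ℝ)+1)) hglim
          (const_div_nat_tendsto C)
        intro k
        calc g (u (φ k)) ≤ C/((φ k : ℝ)+1) := hgu (φ k)
          _ ≤ C/((k:ℝ)+1) := by
              gcongr
              exact_mod_cast hφ.le_apply
      exact le_antisymm hle (hB x₀ hx₀S)
    have hfx₀ : f x₀ ≤ 0 := by
      apply le_of_tendsto hflim
      apply Filter.Eventually.of_forall
      intro k
      have h1 : f (u (φ k)) ≤ -((φ k : ℝ)+1) * g (u (φ k)) := hfu (φ k)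
      have h2 : 0 ≤ g (u (φ k)) := hB _ (hu (φ k))
      nlinarith [h1, h2]
    exact absurd (hP x₀ (sphere_ne_zero hx₀S) hgx₀) (not_lt.mpr hfx₀)

end Main

end FinslerAux

open Matrix

/-- Finsler's lemma: `xᵀ M x > 0` for all nonzero `x` with `xᵀ N x = 0` iff
there exists `α ∈ ℝ` with `M - αN ≻ 0`. -/
theorem stmt16 {n : ℕ} (M N : Matrix (Fin n) (Fin n) ℝ)
    (hM : M.IsSymm) (hN : N.IsSymm) :
    (∀ x : Fin n → ℝ, x ≠ 0 → x ⬝ᵥ (N *ᵥ x) = 0 → 0 < x ⬝ᵥ (M *ᵥ x)) ↔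
      (∃ α : ℝ, (M - α • N).PosDef) := by
  constructor
  · intro hP
    obtain ⟨α, hα⟩ := FinslerAux.sphere_version hP
      (fun {a b} ha hb => FinslerAux.key hP ha hb)
    refine ⟨α, posDef_iff_dotProduct_mulVec.mpr ⟨?_, ?_⟩⟩
    · rw [Matrix.IsHermitian]
      ext i j
      simp only [Matrix.conjTranspose_apply, Matrix.sub_apply, Matrix.smul_apply,
        star_trivial, smul_eq_mul]
      rw [hM.apply i j, hN.apply i j]
    · intro x hx
      have hnx : ‖x‖ ≠ 0 := norm_ne_zero_iff.mpr hx
      have hu : ‖x‖⁻¹ • x ∈ Metric.sphere (0 : Fin n → ℝ) 1 :=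
        mem_sphere_zero_iff_norm.mpr (norm_smul_inv_norm hx)
      have h := hα _ hu
      rw [FinslerAux.qf_smul, FinslerAux.qf_smul] at h
      have hs : 0 < (‖x‖⁻¹)^2 := by positivity
      have hgoal : α * (x ⬝ᵥ (N *ᵥ x)) < x ⬝ᵥ (M *ᵥ x) := by nlinarith
      show 0 < star x ⬝ᵥ ((M - α • N) *ᵥ x)
      rw [star_trivial, Matrix.sub_mulVec, dotProduct_sub,
        Matrix.smul_mulVec, dotProduct_smul, smul_eq_mul]
      linarith
  · rintro ⟨α, hpd⟩ x hx hNx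
    have h := hpd.dotProduct_mulVec_pos hx
    rw [star_trivial, Matrix.sub_mulVec, dotProduct_sub,
      Matrix.smul_mulVec, dotProduct_smul, smul_eq_mul, hNx,
      mul_zero, sub_zero] at h
    exact h
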